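/- Let ξ and t be indeterminates and let Φ : ℂ[x,y] → ℂ[ξ][t,t⁻¹] be the ℂ-algebra homomorphism with Φ(x) = t² and Φ(y) = t⁵ + t⁻² + ξt⁻³ (Φ is injective). For nonzero f ∈ ℂ[x,y] define δ(f) := deg_t(Φ(f)), the largest exponent of t occurring in Φ(f). Then {δ(f) : f ∈ ℂ[x,y] \ ℂ} = {m ∈ ℤ : m ≥ 2}. (In particular the semigroup of values of δ on ℂ[x,y] coincides with that of the weighted degree δ' with δ'(x) = 2, δ'(y) = 3, even though δ' determines a normal algebraic compactification of ℂ² while δ determines only an analytic, non-algebraic, one.) -/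

import Mathlib

open Polynomial LaurentPolynomial

noncomputable section

set_option maxHeartbeats 1000000
set_option synthInstance.maxHeartbeats 400000

/-- The polynomial ring `ℂ[x,y]`, with `x = X 0` and `y = X 1`. -/
abbrev Pxy : Type := MvPolynomial (Fin 2) ℂ

/-- The Laurent polynomial ring `ℂ[ξ][t,t⁻¹]` (`ξ = Polynomial.X`). -/
abbrev LPt : Type := LaurentPolynomial (Polynomial ℂ)

/-- For a nonzero `h ∈ ℂ[ξ][t,t⁻¹]`, the largest exponent of `t` occurring in `h`. -/
def degt (h : LPt) : ℤ := sSup {k : ℤ | AddMonoidAlgebra.coeff h k ≠ 0}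

instance : CoeFun LPt (fun _ => ℤ → Polynomial ℂ) := ⟨fun h => ⇑(AddMonoidAlgebra.coeff h)⟩

/-- The ℂ-algebra homomorphism `Φ : ℂ[x,y] → ℂ[ξ][t,t⁻¹]` with `Φ x = t²` and
`Φ y = t⁵ + t⁻² + ξ t⁻³`. -/
noncomputable def Phi : Pxy →ₐ[ℂ] LPt :=
  MvPolynomial.aeval
    ![LaurentPolynomial.T 2,
      LaurentPolynomial.T 5 + LaurentPolynomial.T (-2) +
        LaurentPolynomial.C Polynomial.X * LaurentPolynomial.T (-3)]

/-! ### Top-coefficient predicates -/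

/-- all coefficients above `n` vanish -/
def QQ (h : LPt) (n : ℤ) : Prop := ∀ k : ℤ, n < k → h k = 0

/-- all coefficients above `n` vanish and the coefficient at `n` is `r` -/
def PP (h : LPt) (n : ℤ) (r : Polynomial ℂ) : Prop := QQ h n ∧ h n = r

lemma QQ.mono {h : LPt} {n m : ℤ} (hq : QQ h n) (hnm : n ≤ m) : QQ h m :=
  fun k hk => hq k (lt_of_le_of_lt hnm hk)

lemma QQ_zero (n : ℤ) : QQ (0 : LPt) n := fun _ _ => rfl

lemma QQ.add {h₁ h₂ : LPt} {n : ℤ} (q₁ : QQ h₁ n) (q₂ : QQ h₂ n) : QQ (h₁ + h₂) n := by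
  intro k hk
  have : (h₁ + h₂) k = h₁ k + h₂ k := rfl
  rw [this, q₁ k hk, q₂ k hk, add_zero]

lemma QQ.neg {h : LPt} {n : ℤ} (q : QQ h n) : QQ (-h) n := by
  intro k hk
  have : (-h) k = -(h k) := rfl
  rw [this, q k hk, neg_zero]

lemma QQ_sum {ι : Type*} {s : Finset ι} {u : ι → LPt} {n : ℤ}
    (hu : ∀ i ∈ s, QQ (u i) n) : QQ (∑ i ∈ s, u i) n := by
  intro k hk
  have : (∑ i ∈ s, u i) k = ∑ i ∈ s, (u i) k := by
    rw [AddMonoidAlgebra.coeff_sum, Finset.sum_apply']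
  rw [this]
  exact Finset.sum_eq_zero fun i hi => hu i hi k hk

lemma QQ_single {m n : ℤ} (hmn : m ≤ n) (r : Polynomial ℂ) :
    QQ (AddMonoidAlgebra.single m r : LPt) n := by
  intro k hk
  rw [AddMonoidAlgebra.coeff_single, Finsupp.single_apply, if_neg]
  omega

lemma QQ.mul {h₁ h₂ : LPt} {n₁ n₂ : ℤ} (q₁ : QQ h₁ n₁) (q₂ : QQ h₂ n₂) :
    QQ (h₁ * h₂) (n₁ + n₂) := by
  classical
  intro k hk
  rw [AddMonoidAlgebra.mul_apply, Finsupp.sum]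
  refine Finset.sum_eq_zero fun a ha => ?_
  rw [Finsupp.sum]
  refine Finset.sum_eq_zero fun b hb => ?_
  rw [ite_eq_right_iff]
  intro hab
  rcases lt_or_ge n₁ a with h | h
  · exact absurd (q₁ a h) (Finsupp.mem_support_iff.mp ha)
  · have hb2 : n₂ < b := by omega
    exact absurd (q₂ b hb2) (Finsupp.mem_support_iff.mp hb)

lemma mul_coeff_top {h₁ h₂ : LPt} {n₁ n₂ : ℤ} (q₁ : QQ h₁ n₁) (q₂ : QQ h₂ n₂) :
    (h₁ * h₂) (n₁ + n₂) = h₁ n₁ * h₂ n₂ := by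
  classical
  rw [AddMonoidAlgebra.mul_apply]
  have step1 : ∀ a ∈ h₁.coeff.support,
      (Finsupp.sum h₂.coeff fun b rb => if a + b = n₁ + n₂ then h₁ a * rb else 0)
        = if a = n₁ then h₁ n₁ * h₂ n₂ else 0 := by
    intro a ha
    by_cases han : a = n₁
    · subst han
      rw [if_pos rfl]
      rw [Finsupp.sum]
      by_cases hn₂ : n₂ ∈ h₂.coeff.support
      · rw [Finset.sum_eq_single_of_mem n₂ hn₂]
        · rw [if_pos rfl]
        · intro b _ hbn
          rw [if_neg]; omega
      · have h2z : h₂ n₂ = 0 := Finsupp.notMem_support_iff.mp hn₂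
        rw [h2z, mul_zero]
        refine Finset.sum_eq_zero fun b hb => ?_
        rw [ite_eq_right_iff]
        intro hab
        exact absurd (by rwa [show b = n₂ by omega] at hb) hn₂
    · rw [if_neg han]
      have halt : a < n₁ := by
        rcases lt_or_ge a n₁ with h | h
        · exact h
        · rcases eq_or_lt_of_le h with h' | h'
          · exact absurd h'.symm han
          · exact absurd (q₁ a h') (Finsupp.mem_support_iff.mp ha)
      rw [Finsupp.sum]
      refine Finset.sum_eq_zero fun b hb => ?_
      rw [ite_eq_right_iff]
      intro hab
      have : n₂ < b := by omega
      exact absurd (q₂ b this) (Finsupp.mem_support_iff.mp hb)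
  rw [Finsupp.sum, Finset.sum_congr rfl step1]
  by_cases hn₁ : n₁ ∈ h₁.coeff.support
  · rw [Finset.sum_ite_eq' h₁.coeff.support n₁ fun _ => h₁ n₁ * h₂ n₂, if_pos hn₁]
  · rw [Finset.sum_ite_eq' h₁.coeff.support n₁ fun _ => h₁ n₁ * h₂ n₂, if_neg hn₁,
      Finsupp.notMem_support_iff.mp hn₁, zero_mul]

lemma PP.mul {h₁ h₂ : LPt} {n₁ n₂ : ℤ} {r₁ r₂ : Polynomial ℂ}
    (p₁ : PP h₁ n₁ r₁) (p₂ : PP h₂ n₂ r₂) : PP (h₁ * h₂) (n₁ + n₂) (r₁ * r₂) := by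
  refine ⟨p₁.1.mul p₂.1, ?_⟩
  rw [mul_coeff_top p₁.1 p₂.1, p₁.2, p₂.2]

lemma PP_single (n : ℤ) (r : Polynomial ℂ) : PP (AddMonoidAlgebra.single n r : LPt) n r :=
  ⟨QQ_single le_rfl r, by rw [AddMonoidAlgebra.coeff_single, Finsupp.single_apply, if_pos rfl]⟩

lemma PP_one : PP (1 : LPt) 0 1 := PP_single 0 1

lemma PP.pow {h : LPt} {n : ℤ} {r : Polynomial ℂ} (p : PP h n r) (b : ℕ) :
    PP (h ^ b) (b * n) (r ^ b) := by
  induction b with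
  | zero => simpa using PP_one
  | succ b ih =>
      have h2 := ih.mul p
      rw [pow_succ, pow_succ]
      have hcast : ((b : ℤ) + 1) * n = (b : ℤ) * n + n := by ring
      rw [show ((b+1 : ℕ) : ℤ) = (b : ℤ) + 1 by push_cast; ring, hcast]
      exact h2

lemma PP.add_left {h₁ h₂ : LPt} {n₁ n₂ : ℤ} {r₁ : Polynomial ℂ}
    (p₁ : PP h₁ n₁ r₁) (q₂ : QQ h₂ n₂) (hlt : n₂ < n₁) : PP (h₁ + h₂) n₁ r₁ := by
  refine ⟨p₁.1.add (q₂.mono hlt.le), ?_⟩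
  have : (h₁ + h₂) n₁ = h₁ n₁ + h₂ n₁ := rfl
  rw [this, q₂ n₁ hlt, p₁.2, add_zero]

lemma PP.add_right {h₁ h₂ : LPt} {n₁ n₂ : ℤ} {r₂ : Polynomial ℂ}
    (q₁ : QQ h₁ n₁) (p₂ : PP h₂ n₂ r₂) (hlt : n₁ < n₂) : PP (h₁ + h₂) n₂ r₂ := by
  have := p₂.add_left q₁ hlt
  rwa [add_comm] at this

lemma PP.add_eq {h₁ h₂ : LPt} {n : ℤ} {r₁ r₂ : Polynomial ℂ}
    (p₁ : PP h₁ n r₁) (p₂ : PP h₂ n r₂) : PP (h₁ + h₂) n (r₁ + r₂) := by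
  refine ⟨p₁.1.add p₂.1, ?_⟩
  have : (h₁ + h₂) n = h₁ n + h₂ n := rfl
  rw [this, p₁.2, p₂.2]

lemma PP.ne_zero {h : LPt} {n : ℤ} {r : Polynomial ℂ} (p : PP h n r) (hr : r ≠ 0) :
    h ≠ 0 := by
  intro h0
  apply hr
  rw [← p.2, h0]; rfl

/-- bridge to `degt` -/
lemma PP.degt_eq {h : LPt} {n : ℤ} {r : Polynomial ℂ} (p : PP h n r) (hr : r ≠ 0) :
    degt h = n := by
  apply IsGreatest.csSup_eq
  constructor
  · show h n ≠ 0
    rw [p.2]; exact hr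
  · intro k hk
    by_contra hnk
    exact hk (p.1 k (by omega))

lemma QQ_degt {h : LPt} (h0 : h ≠ 0) : QQ h (degt h) := by
  intro k hk
  by_contra hne
  have hmem : k ∈ {m : ℤ | h m ≠ 0} := hne
  have hbdd : BddAbove {m : ℤ | h m ≠ 0} := by
    have : {m : ℤ | h m ≠ 0} = ↑h.coeff.support := by
      ext m; simp [Finsupp.mem_support_iff]
    rw [this]
    exact h.coeff.support.finite_toSet.bddAbove
  have := le_csSup hbdd hmem
  rw [← degt] at this
  omega

/-! ### ξ-degree bound predicate -/

/-- all coefficients have `ξ`-degree at most `m` -/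
def EE (h : LPt) (m : ℕ) : Prop := ∀ k : ℤ, (h k).natDegree ≤ m

lemma EE.mono {h : LPt} {m m' : ℕ} (e : EE h m) (hmm : m ≤ m') : EE h m' :=
  fun k => (e k).trans hmm

lemma EE_zero (m : ℕ) : EE (0 : LPt) m := fun _ => by simp

lemma EE_single {n : ℤ} {r : Polynomial ℂ} {m : ℕ} (hr : r.natDegree ≤ m) :
    EE (AddMonoidAlgebra.single n r : LPt) m := by
  intro k
  rw [AddMonoidAlgebra.coeff_single, Finsupp.single_apply]
  split
  · exact hr
  · simp

lemma EE.add {h₁ h₂ : LPt} {m : ℕ} (e₁ : EE h₁ m) (e₂ : EE h₂ m) : EE (h₁ + h₂) m := by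
  intro k
  have : (h₁ + h₂) k = h₁ k + h₂ k := rfl
  rw [this]
  exact (Polynomial.natDegree_add_le _ _).trans (max_le (e₁ k) (e₂ k))

lemma EE_sum {ι : Type*} {s : Finset ι} {u : ι → LPt} {m : ℕ}
    (hu : ∀ i ∈ s, EE (u i) m) : EE (∑ i ∈ s, u i) m := by
  intro k
  have : (∑ i ∈ s, u i) k = ∑ i ∈ s, (u i) k := by rw [AddMonoidAlgebra.coeff_sum, Finset.sum_apply']
  rw [this]
  exact Polynomial.natDegree_sum_le_of_forall_le _ _ fun i hi => hu i hi k

lemma EE.mul {h₁ h₂ : LPt} {m₁ m₂ : ℕ} (e₁ : EE h₁ m₁) (e₂ : EE h₂ m₂) :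
    EE (h₁ * h₂) (m₁ + m₂) := by
  classical
  intro k
  rw [AddMonoidAlgebra.mul_apply, Finsupp.sum]
  refine Polynomial.natDegree_sum_le_of_forall_le _ _ fun a _ => ?_
  rw [Finsupp.sum]
  refine Polynomial.natDegree_sum_le_of_forall_le _ _ fun b _ => ?_
  split
  · exact (Polynomial.natDegree_mul_le).trans (add_le_add (e₁ a) (e₂ b))
  · simp

lemma EE.pow {h : LPt} {m : ℕ} (e : EE h m) (b : ℕ) : EE (h ^ b) (b * m) := by
  induction b with
  | zero =>
      intro k
      rw [pow_zero]
      have h1 : (1 : LPt) k = (AddMonoidAlgebra.single (0:ℤ) (1:Polynomial ℂ)) k := rfl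
      rw [h1, AddMonoidAlgebra.coeff_single, Finsupp.single_apply]
      split <;> simp
  | succ b ih =>
      rw [pow_succ, Nat.succ_mul]
      exact ih.mul e

/-! ### The ring maps -/

/-- `ℂ → ℂ[ξ][t,t⁻¹]` -/
def cc : ℂ →+* LPt := (LaurentPolynomial.C).comp (Polynomial.C)

/-- `ℂ[x] → ℂ[ξ][t,t⁻¹]`, `x ↦ t²` -/
def ph2 : Polynomial ℂ →+* LPt := Polynomial.eval₂RingHom cc (T 2)

/-- image of `y` -/
def YY : LPt := T 5 + T (-2) + LaurentPolynomial.C Polynomial.X * T (-3)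

/-- twisted image of `y` (after `ξ ↦ ξt`) -/
def YY' : LPt := T 5 + T (-2) + LaurentPolynomial.C Polynomial.X * T (-2)

/-- `ℂ[x][y]` -/
abbrev AA : Type := Polynomial (Polynomial ℂ)

def Psi : AA →+* LPt := Polynomial.eval₂RingHom ph2 YY
def Psi' : AA →+* LPt := Polynomial.eval₂RingHom ph2 YY'

/-- `ℂ[ξ] → ℂ[ξ][t,t⁻¹]`, `ξ ↦ ξ t` -/
def phx : Polynomial ℂ →+* LPt :=
  Polynomial.eval₂RingHom cc (LaurentPolynomial.C Polynomial.X * T 1)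

/-- `n ↦ T n` as a monoid hom -/
def psT : Multiplicative ℤ →* LPt where
  toFun n := T (Multiplicative.toAdd n)
  map_one' := T_zero
  map_mul' m n := T_add _ _

/-- the twist `ξ ↦ ξ t`, `t ↦ t` -/
def chi : LPt →+* LPt :=
  AddMonoidAlgebra.liftNCRingHom phx psT fun _ _ => Commute.all _ _

lemma chi_single (n : ℤ) (r : Polynomial ℂ) :
    chi (AddMonoidAlgebra.single n r) = phx r * T n := by
  have : chi (AddMonoidAlgebra.single n r)
      = phx r * psT (Multiplicative.ofAdd n) :=
    AddMonoidAlgebra.liftNC_single _ _ _ _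
  rw [this]
  rfl

lemma cc_apply (c : ℂ) : cc c = AddMonoidAlgebra.single 0 (Polynomial.C c) := by
  rw [show (AddMonoidAlgebra.single (0:ℤ) (Polynomial.C c) : LPt) = LaurentPolynomial.C (Polynomial.C c)
    from single_eq_C _]
  rfl

/-! ### structure of `ph2` -/

lemma ph2_eq_sum (a : Polynomial ℂ) :
    ph2 a = ∑ e ∈ a.support, AddMonoidAlgebra.single ((e : ℤ) * 2) (Polynomial.C (a.coeff e)) := by
  rw [ph2, Polynomial.coe_eval₂RingHom, Polynomial.eval₂_eq_sum, Polynomial.sum]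
  refine Finset.sum_congr rfl fun e _ => ?_
  rw [T_pow, cc_apply, show ((e:ℕ) * (2:ℤ)) = (0 : ℤ) + (e : ℤ) * 2 by ring,
    single_eq_C_mul_T, single_eq_C_mul_T, mul_assoc, ← T_add]
  norm_num

lemma QQ_ph2 (a : Polynomial ℂ) : QQ (ph2 a) (2 * a.natDegree) := by
  rw [ph2_eq_sum]
  refine QQ_sum fun e he => QQ_single ?_ _
  have := Polynomial.le_natDegree_of_mem_supp e he
  omega

lemma PP_ph2 {a : Polynomial ℂ} (ha : a ≠ 0) :
    PP (ph2 a) (2 * a.natDegree) (Polynomial.C a.leadingCoeff) := by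
  refine ⟨QQ_ph2 a, ?_⟩
  rw [ph2_eq_sum]
  have hco : ∀ k : ℤ, (∑ e ∈ a.support,
      AddMonoidAlgebra.single ((e : ℤ) * 2) (Polynomial.C (a.coeff e)) : LPt) k
      = ∑ e ∈ a.support,
        (AddMonoidAlgebra.single ((e : ℤ) * 2) (Polynomial.C (a.coeff e)) : LPt) k := by
    intro k; rw [AddMonoidAlgebra.coeff_sum, Finset.sum_apply']
  rw [hco]
  have step : ∀ e ∈ a.support,
      (AddMonoidAlgebra.single ((e : ℤ) * 2) (Polynomial.C (a.coeff e)) : LPt) (2 * a.natDegree)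
        = if e = a.natDegree then Polynomial.C (a.coeff e) else 0 := by
    intro e _
    rw [AddMonoidAlgebra.coeff_single, Finsupp.single_apply]
    by_cases he : e = a.natDegree
    · rw [if_pos he, if_pos]; omega
    · rw [if_neg he, if_neg]
      intro hc
      apply he
      omega
  rw [Finset.sum_congr rfl step, Finset.sum_ite_eq' a.support a.natDegree
    fun e => Polynomial.C (a.coeff e), if_pos (Polynomial.natDegree_mem_support_of_nonzero ha)]
  rfl

lemma EE_ph2 (a : Polynomial ℂ) : EE (ph2 a) 0 := by
  rw [ph2_eq_sum]
  exact EE_sum fun e _ => EE_single (by simp)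

/-! ### structure of `phx` -/

lemma phx_eq_sum (p : Polynomial ℂ) :
    phx p = ∑ e ∈ p.support,
      AddMonoidAlgebra.single (e : ℤ) (Polynomial.C (p.coeff e) * Polynomial.X ^ e) := by
  rw [phx, Polynomial.coe_eval₂RingHom, Polynomial.eval₂_eq_sum, Polynomial.sum]
  refine Finset.sum_congr rfl fun e _ => ?_
  rw [mul_pow, T_pow, ← map_pow, cc_apply,
    show ((e:ℕ) * (1:ℤ)) = (e : ℤ) by ring,
    show (AddMonoidAlgebra.single ((0:ℤ)) (Polynomial.C (p.coeff e)) : LPt)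
      = LaurentPolynomial.C (Polynomial.C (p.coeff e)) from single_eq_C _,
    single_eq_C_mul_T, ← mul_assoc, ← map_mul,
    show ((e:ℤ)) = (0 : ℤ) + (e : ℤ) by ring]

lemma QQ_phx (p : Polynomial ℂ) : QQ (phx p) (p.natDegree) := by
  rw [phx_eq_sum]
  refine QQ_sum fun e he => QQ_single ?_ _
  exact_mod_cast Polynomial.le_natDegree_of_mem_supp e he

/-! ### apply lemmas -/

lemma ph2_apply (a : Polynomial ℂ) : ph2 a = Polynomial.eval₂ cc (T 2) a := rfl
lemma phx_apply (a : Polynomial ℂ) :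
    phx a = Polynomial.eval₂ cc (LaurentPolynomial.C Polynomial.X * T 1) a := rfl
lemma Psi_apply (f : AA) : Psi f = Polynomial.eval₂ ph2 YY f := rfl
lemma Psi'_apply (f : AA) : Psi' f = Polynomial.eval₂ ph2 YY' f := rfl

lemma ph2_X : ph2 Polynomial.X = T 2 := by rw [ph2_apply, Polynomial.eval₂_X]

lemma PP_T (n : ℤ) : PP (T n : LPt) n 1 := PP_single n 1

lemma QQ_T (n : ℤ) : QQ (T n : LPt) n := QQ_single le_rfl 1

/-! ### chi basics -/

lemma chi_T (n : ℤ) : chi (T n) = T n := by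
  have h1 : (T n : LPt) = AddMonoidAlgebra.single n 1 := rfl
  rw [h1, chi_single, map_one, one_mul]
  rfl

lemma chi_CC (r : Polynomial ℂ) : chi (LaurentPolynomial.C r) = phx r := by
  rw [show (LaurentPolynomial.C r : LPt) = AddMonoidAlgebra.single 0 r from (single_eq_C r).symm,
    chi_single, T_zero, mul_one]

lemma QQ_chi {h : LPt} {n : ℤ} {m : ℕ} (q : QQ h n) (e : EE h m) :
    QQ (chi h) (n + m) := by
  have hrep : chi h = ∑ k ∈ h.coeff.support, phx (h k) * T k := by
    conv_lhs => rw [← AddMonoidAlgebra.sum_coeff_single h]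
    rw [Finsupp.sum, map_sum]
    exact Finset.sum_congr rfl fun k _ => chi_single k (h k)
  rw [hrep]
  refine QQ_sum fun k hk => ?_
  have hk1 : k ≤ n := by
    by_contra hc
    exact (Finsupp.mem_support_iff.mp hk) (q k (by omega))
  have hq : QQ (phx (h k) * T k) ((h k).natDegree + k) :=
    (QQ_phx (h k)).mul (QQ_T k)
  exact hq.mono (by have := e k; omega)

lemma chi_comp_cc : chi.comp cc = cc := by
  refine RingHom.ext fun c => ?_
  rw [RingHom.comp_apply, cc_apply, chi_single, T_zero, mul_one, phx_apply,
    Polynomial.eval₂_C, cc_apply]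

lemma chi_comp_ph2 (a : Polynomial ℂ) : chi (ph2 a) = ph2 a := by
  rw [ph2_apply, Polynomial.hom_eval₂, chi_T, chi_comp_cc]

lemma chi_YY : chi YY = YY' := by
  rw [YY, YY', map_add, map_add, chi_T, chi_T, map_mul, chi_T, chi_CC, phx_apply,
    Polynomial.eval₂_X, mul_assoc, ← T_add]
  norm_num

lemma chi_Psi (f : AA) : chi (Psi f) = Psi' f := by
  rw [Psi_apply, Psi'_apply, Polynomial.hom_eval₂, chi_YY]
  have : chi.comp ph2 = ph2 := RingHom.ext chi_comp_ph2
  rw [this]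

/-! ### EE bound for Psi -/

lemma EE_YY : EE YY 1 := by
  rw [YY, show (LaurentPolynomial.C Polynomial.X * T (-3) : LPt)
      = AddMonoidAlgebra.single (-3) Polynomial.X from (single_eq_C_mul_T _ _).symm,
    show (T 5 : LPt) = AddMonoidAlgebra.single 5 1 from rfl,
    show (T (-2) : LPt) = AddMonoidAlgebra.single (-2) 1 from rfl]
  exact (EE.add (EE_single (by simp)) (EE_single (by simp))).add (EE_single (by simp))

lemma EE_Psi (f : AA) : EE (Psi f) f.natDegree := by
  rw [Psi_apply, Polynomial.eval₂_eq_sum, Polynomial.sum]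
  refine EE_sum fun e he => ?_
  have h1 : EE (ph2 (f.coeff e) * YY ^ e) (0 + e * 1) := (EE_ph2 _).mul (EE_YY.pow e)
  exact h1.mono (by have := Polynomial.le_natDegree_of_mem_supp e he; omega)

/-! ### explicit leading facts for YY, YY', Psi gA, Psi' gA -/

lemma PP_YY : PP YY 5 1 := by
  rw [YY, show (LaurentPolynomial.C Polynomial.X * T (-3) : LPt)
      = AddMonoidAlgebra.single (-3) Polynomial.X from (single_eq_C_mul_T _ _).symm, add_assoc]
  exact (PP_T 5).add_left ((QQ_T (-2)).add ((QQ_single (by norm_num) _))) (by norm_num)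

lemma PP_YY' : PP YY' 5 1 := by
  rw [YY', show (LaurentPolynomial.C Polynomial.X * T (-2) : LPt)
      = AddMonoidAlgebra.single (-2) Polynomial.X from (single_eq_C_mul_T _ _).symm, add_assoc]
  exact (PP_T 5).add_left ((QQ_T (-2)).add ((QQ_single le_rfl _))) (by norm_num)

/-- `g = y² - x⁵` -/
def gA : AA := Polynomial.X ^ 2 - Polynomial.C (Polynomial.X ^ 5)

lemma monic_gA : gA.Monic := Polynomial.monic_X_pow_sub_C _ (by norm_num)

lemma natDegree_gA : gA.natDegree = 2 := by
  rw [gA]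
  exact Polynomial.natDegree_X_pow_sub_C

lemma ph2_X5 : ph2 (Polynomial.X ^ 5) = T 10 := by
  rw [map_pow, ph2_X, T_pow]
  norm_num

lemma Psi_gA_eq : Psi gA = YY ^ 2 - T 10 := by
  rw [gA, map_sub, map_pow, ← ph2_X5]
  refine congrArg₂ (· - ·) ?_ ?_
  · rw [Psi_apply, Polynomial.eval₂_X]
  · rw [Psi_apply, Polynomial.eval₂_C]

lemma Psi'_gA_eq : Psi' gA = YY' ^ 2 - T 10 := by
  rw [gA, map_sub, map_pow, ← ph2_X5]
  refine congrArg₂ (· - ·) ?_ ?_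
  · rw [Psi'_apply, Polynomial.eval₂_X]
  · rw [Psi'_apply, Polynomial.eval₂_C]

lemma two_eq_single : (2 : LPt) = AddMonoidAlgebra.single 0 2 := by
  rw [single_eq_C]
  exact (map_ofNat LaurentPolynomial.C 2).symm

lemma PP_two : PP (2 : LPt) 0 2 := by
  rw [two_eq_single]; exact PP_single _ _

lemma T5_sq : (T 5 : LPt) * T 5 = T 10 := by
  rw [← T_add]
  norm_num

lemma PP_YYsq : PP (YY ^ 2 - T 10) 3 2 := by
  set W : LPt := (AddMonoidAlgebra.single (-2) 1 : LPt) + (AddMonoidAlgebra.single (-3) Polynomial.X : LPt) with hW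
  have hYY : YY = T 5 + W := by
    rw [YY, show (LaurentPolynomial.C Polynomial.X * T (-3) : LPt)
        = AddMonoidAlgebra.single (-3) Polynomial.X from (single_eq_C_mul_T _ _).symm, add_assoc,
      show (T (-2) : LPt) = (AddMonoidAlgebra.single (-2) 1 : LPt) from rfl, ← hW]
  have key : YY ^ 2 - T 10 = (2 : LPt) * (T 5 * W) + W * W := by
    rw [hYY, ← T5_sq]; ring
  rw [key]
  have hQW : QQ W (-2) := by
    rw [hW]
    exact (QQ_single le_rfl _).add (QQ_single (by norm_num) _)
  have hPW : PP W (-2) 1 := by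
    rw [hW]
    exact (PP_single _ _).add_left (QQ_single (show (-3:ℤ) ≤ -3 from le_rfl) _) (by norm_num)
  have h5W : PP ((T 5 : LPt) * W) 3 1 := by
    have h := (PP_T 5).mul hPW
    rw [show (5:ℤ) + -2 = 3 by norm_num, one_mul] at h
    exact h
  have hmul : PP ((2 : LPt) * (T 5 * W)) 3 2 := by
    have h := PP_two.mul h5W
    rw [show (0:ℤ) + 3 = 3 by norm_num, mul_one] at h
    exact h
  have hWW : QQ (W * W) (-4) := by
    have h := hQW.mul hQW
    rw [show (-2:ℤ) + -2 = -4 by norm_num] at h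
    exact h
  exact hmul.add_left (hWW.mono (show (-4:ℤ) ≤ 2 by norm_num)) (by norm_num)

lemma PP_Psi_gA : PP (Psi gA) 3 2 := by rw [Psi_gA_eq]; exact PP_YYsq

lemma lcg'_eq : (2 : Polynomial ℂ) * (1 + Polynomial.X)
    = Polynomial.C 2 * Polynomial.X + Polynomial.C 2 := by
  rw [show (Polynomial.C (2:ℂ)) = (2 : Polynomial ℂ) from map_ofNat _ 2]
  ring

lemma PP_Psi'_gA : PP (Psi' gA) 3 (Polynomial.C 2 * Polynomial.X + Polynomial.C 2) := by
  rw [Psi'_gA_eq, ← lcg'_eq]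
  set W : LPt := (AddMonoidAlgebra.single (-2) (1 + Polynomial.X) : LPt) with hW
  have hYY : YY' = T 5 + W := by
    rw [YY', show (LaurentPolynomial.C Polynomial.X * T (-2) : LPt)
        = AddMonoidAlgebra.single (-2) Polynomial.X from (single_eq_C_mul_T _ _).symm, add_assoc,
      show (T (-2) : LPt) = AddMonoidAlgebra.single (-2) 1 from rfl, ← AddMonoidAlgebra.single_add, ← hW]
  have key : YY' ^ 2 - T 10 = (2 : LPt) * (T 5 * W) + W * W := by
    rw [hYY, ← T5_sq]; ring
  rw [key]
  have hQW : QQ W (-2) := by rw [hW]; exact QQ_single le_rfl _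
  have hPW : PP W (-2) (1 + Polynomial.X) := by rw [hW]; exact PP_single _ _
  have h5W : PP ((T 5 : LPt) * W) 3 (1 + Polynomial.X) := by
    have h := (PP_T 5).mul hPW
    rw [show (5:ℤ) + -2 = 3 by norm_num, one_mul] at h
    exact h
  have hmul : PP ((2 : LPt) * (T 5 * W)) 3 (2 * (1 + Polynomial.X)) := by
    have h := PP_two.mul h5W
    rw [show (0:ℤ) + 3 = 3 by norm_num] at h
    exact h
  have hWW : QQ (W * W) (-4) := by
    have h := hQW.mul hQW
    rw [show (-2:ℤ) + -2 = -4 by norm_num] at h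
    exact h
  exact hmul.add_left (hWW.mono (show (-4:ℤ) ≤ 2 by norm_num)) (by norm_num)

/-! ### linear polynomials in y -/

/-- the `t`-degree of `Psi (a + b y)` -/
def dval (s : AA) : ℤ :=
  if s.coeff 1 = 0 then 2 * (s.coeff 0).natDegree
  else max (2 * (s.coeff 0).natDegree) (5 + 2 * (s.coeff 1).natDegree)

lemma dval_ne_three (s : AA) : dval s ≠ 3 := by
  rw [dval]
  split
  · omega
  · intro h
    have h5 : (5 : ℤ) + 2 * (s.coeff 1).natDegree ≤ 3 := h ▸ le_max_right _ _
    omega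

lemma dval_ge_five {s : AA} (h : s.coeff 1 ≠ 0) :
    5 + 2 * ((s.coeff 1).natDegree : ℤ) ≤ dval s := by
  rw [dval, if_neg h]
  exact le_max_right _ _

lemma dval_of_constant {s : AA} (h : s.coeff 1 = 0) :
    dval s = 2 * (s.coeff 0).natDegree := by rw [dval, if_pos h]

/-- parity lemma : the leading coefficient of `Psi (a + by)` is a nonzero constant -/
lemma PP_lin {W : LPt} (hW : PP W 5 1) {r : AA} (hr : r ≠ 0) (h1 : r.natDegree ≤ 1) :
    ∃ c : ℂ, c ≠ 0 ∧ PP (Polynomial.eval₂ ph2 W r) (dval r) (Polynomial.C c) := by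
  set a := r.coeff 0 with ha
  set b := r.coeff 1 with hb
  have key : Polynomial.eval₂ ph2 W r = ph2 b * W + ph2 a := by
    conv_lhs => rw [Polynomial.eq_X_add_C_of_natDegree_le_one h1]
    rw [Polynomial.eval₂_add, Polynomial.eval₂_mul, Polynomial.eval₂_C, Polynomial.eval₂_C,
      Polynomial.eval₂_X]
  by_cases hb0 : b = 0
  · have ha0 : a ≠ 0 := by
      intro ha0
      apply hr
      rw [Polynomial.eq_X_add_C_of_natDegree_le_one h1, ← ha, ← hb, ha0, hb0]
      simp
    refine ⟨a.leadingCoeff, by simp [Polynomial.leadingCoeff_ne_zero, ha0], ?_⟩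
    rw [key, hb0, map_zero, zero_mul, zero_add, dval_of_constant (hb ▸ hb0)]
    exact PP_ph2 ha0
  · have hbW : PP (ph2 b * W) (2 * b.natDegree + 5) (Polynomial.C b.leadingCoeff) := by
      have h := (PP_ph2 hb0).mul hW
      rwa [mul_one] at h
    by_cases ha0 : a = 0
    · refine ⟨b.leadingCoeff, by simp [Polynomial.leadingCoeff_ne_zero, hb0], ?_⟩
      rw [key, ha0, map_zero, add_zero]
      have hd : dval r = 2 * b.natDegree + 5 := by
        rw [dval, if_neg (hb ▸ hb0), ← ha, ← hb, ha0]
        simp only [Polynomial.natDegree_zero, Nat.cast_zero, mul_zero]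
        omega
      rw [hd]
      exact hbW
    · have hpa := PP_ph2 ha0
      rcases lt_trichotomy (2 * (a.natDegree : ℤ)) (2 * b.natDegree + 5) with hlt | heq | hgt
      · refine ⟨b.leadingCoeff, by simp [Polynomial.leadingCoeff_ne_zero, hb0], ?_⟩
        have hd : dval r = 2 * b.natDegree + 5 := by
          rw [dval, if_neg (hb ▸ hb0), ← ha, ← hb]
          omega
        rw [key, hd]
        exact hbW.add_left hpa.1 hlt
      · omega
      · refine ⟨a.leadingCoeff, by simp [Polynomial.leadingCoeff_ne_zero, ha0], ?_⟩
        have hd : dval r = 2 * a.natDegree := by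
          rw [dval, if_neg (hb ▸ hb0), ← ha, ← hb]
          omega
        rw [key, hd]
        exact PP.add_right hbW.1 hpa hgt

/-! ### the g-adic top coefficient -/

lemma natDegree_div_lt {f : AA} (h : ¬ f.natDegree ≤ 1) :
    (f /ₘ gA).natDegree < f.natDegree := by
  rw [Polynomial.natDegree_divByMonic f monic_gA, natDegree_gA]
  omega

/-- the leading coefficient of the `g`-adic expansion -/
def topc (f : AA) : AA :=
  if h : f.natDegree ≤ 1 then f else topc (f /ₘ gA)
termination_by f.natDegree
decreasing_by exact natDegree_div_lt h

/-- the number of `g`-factors in the top term of the `g`-adic expansion -/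
def NNc (f : AA) : ℕ :=
  if h : f.natDegree ≤ 1 then 0 else NNc (f /ₘ gA) + 1
termination_by f.natDegree
decreasing_by exact natDegree_div_lt h

lemma topc_of_le {f : AA} (h : f.natDegree ≤ 1) : topc f = f := by
  rw [topc, dif_pos h]

lemma topc_of_gt {f : AA} (h : ¬ f.natDegree ≤ 1) : topc f = topc (f /ₘ gA) := by
  rw [topc]; rw [dif_neg h]

lemma NNc_of_le {f : AA} (h : f.natDegree ≤ 1) : NNc f = 0 := by
  rw [NNc, dif_pos h]

lemma NNc_of_gt {f : AA} (h : ¬ f.natDegree ≤ 1) : NNc f = NNc (f /ₘ gA) + 1 := by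
  rw [NNc]; rw [dif_neg h]

lemma natDegree_mod_le (f : AA) : (f %ₘ gA).natDegree ≤ 1 := by
  by_cases h0 : f %ₘ gA = 0
  · rw [h0]; simp
  · have hlt := Polynomial.degree_modByMonic_lt f monic_gA
    have hdg : gA.degree = (2 : ℕ) := by
      rw [Polynomial.degree_eq_natDegree (monic_gA.ne_zero), natDegree_gA]
    rw [hdg] at hlt
    have h2 : (f %ₘ gA).natDegree < 2 :=
      (Polynomial.natDegree_lt_iff_degree_lt h0).mpr (by exact_mod_cast hlt)
    omega

lemma lcg'_natDegree : (Polynomial.C 2 * Polynomial.X + Polynomial.C 2 : Polynomial ℂ).natDegree = 1 :=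
  Polynomial.natDegree_linear (by norm_num)

lemma lcg'_ne_zero : (Polynomial.C 2 * Polynomial.X + Polynomial.C 2 : Polynomial ℂ) ≠ 0 := by
  intro h
  have := lcg'_natDegree
  rw [h] at this
  simp at this

/-- Main inductive lemma: leading behaviour of `Psi'` -/
lemma Cmain : ∀ (n : ℕ) (f : AA), f.natDegree = n → f ≠ 0 →
    ∃ (M : ℤ) (w : Polynomial ℂ), w ≠ 0 ∧ PP (Psi' f) M w ∧
      dval (topc f) + 3 * NNc f ≤ M ∧
      f.natDegree = 2 * NNc f + (topc f).natDegree ∧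
      topc f ≠ 0 ∧ (topc f).natDegree ≤ 1 := by
  intro n
  induction n using Nat.strong_induction_on with
  | _ n ih =>
    intro f hfn hf0
    by_cases hle : f.natDegree ≤ 1
    · obtain ⟨c, hc0, hP⟩ := PP_lin PP_YY' hf0 hle
      refine ⟨dval f, Polynomial.C c, by simpa using hc0, ?_, ?_, ?_, ?_, ?_⟩
      · rw [Psi'_apply]; exact hP
      · rw [topc_of_le hle, NNc_of_le hle]; omega
      · rw [topc_of_le hle, NNc_of_le hle]; omega
      · rw [topc_of_le hle]; exact hf0
      · rw [topc_of_le hle]; exact hle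
    · set q := f /ₘ gA with hq
      set r := f %ₘ gA with hr
      have hfd : f = r + gA * q := (Polynomial.modByMonic_add_div f gA).symm
      have hq0 : q ≠ 0 := by
        intro h0
        apply hle
        rw [hfd, h0, mul_zero, add_zero]
        exact natDegree_mod_le f
      have hqd : q.natDegree = f.natDegree - 2 := by
        rw [hq, Polynomial.natDegree_divByMonic f monic_gA, natDegree_gA]
      have hqlt : q.natDegree < n := by omega
      obtain ⟨Mq, wq, hwq0, hPq, hbd, hdeg, htc0, htc1⟩ := ih q.natDegree hqlt q rfl hq0
      have hPqg : PP (Psi' (gA * q)) (3 + Mq)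
          ((Polynomial.C 2 * Polynomial.X + Polynomial.C 2) * wq) := by
        rw [map_mul]
        exact PP_Psi'_gA.mul hPq
      have hw2 : (Polynomial.C 2 * Polynomial.X + Polynomial.C 2) * wq ≠ 0 :=
        mul_ne_zero lcg'_ne_zero hwq0
      have hw2deg : 1 ≤ ((Polynomial.C 2 * Polynomial.X + Polynomial.C 2) * wq).natDegree := by
        rw [Polynomial.natDegree_mul lcg'_ne_zero hwq0, lcg'_natDegree]
        omega
      have htopf : topc f = topc q := topc_of_gt hle
      have hNNf : NNc f = NNc q + 1 := NNc_of_gt hle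
      have hfdeg : f.natDegree = 2 * NNc f + (topc f).natDegree := by
        rw [htopf, hNNf]
        omega
      have hPsif : Psi' f = Psi' r + Psi' (gA * q) := by
        conv_lhs => rw [hfd]
        rw [map_add]
      by_cases hr0 : r = 0
      · refine ⟨3 + Mq, _, hw2, ?_, ?_, hfdeg, htopf ▸ htc0, htopf ▸ htc1⟩
        · rw [hPsif, hr0, map_zero, zero_add]
          exact hPqg
        · rw [htopf, hNNf]
          push_cast
          omega
      · obtain ⟨c, hc0, hPr⟩ := PP_lin PP_YY' hr0 (natDegree_mod_le f)
        have hPr' : PP (Psi' r) (dval r) (Polynomial.C c) := by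
          rw [Psi'_apply]; exact hPr
        rcases lt_trichotomy (dval r) (3 + Mq) with hlt | heq | hgt
        · refine ⟨3 + Mq, _, hw2, ?_, ?_, hfdeg, htopf ▸ htc0, htopf ▸ htc1⟩
          · rw [hPsif]
            exact PP.add_right hPr'.1 hPqg hlt
          · rw [htopf, hNNf]; push_cast; omega
        · have hsum0 : Polynomial.C c + (Polynomial.C 2 * Polynomial.X + Polynomial.C 2) * wq ≠ 0 := by
            intro h0
            have h1 : (Polynomial.C 2 * Polynomial.X + Polynomial.C 2) * wq = -Polynomial.C c :=
              eq_neg_of_add_eq_zero_right h0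
            have h2 := congrArg Polynomial.natDegree h1
            rw [Polynomial.natDegree_mul lcg'_ne_zero hwq0, lcg'_natDegree,
              Polynomial.natDegree_neg, Polynomial.natDegree_C] at h2
            omega
          refine ⟨3 + Mq, _, hsum0, ?_, ?_, hfdeg, htopf ▸ htc0, htopf ▸ htc1⟩
          · rw [hPsif]
            exact (heq ▸ hPr' : PP (Psi' r) (3 + Mq) _).add_eq hPqg
          · rw [htopf, hNNf]; push_cast; omega
        · refine ⟨dval r, Polynomial.C c, Polynomial.C_ne_zero.mpr hc0, ?_, ?_, hfdeg, htopf ▸ htc0, htopf ▸ htc1⟩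
          · rw [hPsif]
            exact hPr'.add_left hPqg.1 hgt
          · rw [htopf, hNNf]; push_cast; omega

/-! ### injectivity of Psi -/

lemma Psi'_ne_zero {f : AA} (hf : f ≠ 0) : Psi' f ≠ 0 := by
  obtain ⟨M, w, hw0, hP, -, -, -, -⟩ := Cmain f.natDegree f rfl hf
  exact hP.ne_zero hw0

lemma Psi_ne_zero {f : AA} (hf : f ≠ 0) : Psi f ≠ 0 := by
  intro h0
  apply Psi'_ne_zero hf
  rw [← chi_Psi, h0, map_zero]

/-! ### the lower bound -/

lemma degt_Psi_ge {f : AA} (hnc : ¬ ∃ c : ℂ, f = Polynomial.C (Polynomial.C c)) :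
    2 ≤ degt (Psi f) := by
  have hf0 : f ≠ 0 := by
    intro h
    exact hnc ⟨0, by rw [h]; simp⟩
  by_cases hn0 : f.natDegree = 0
  · obtain ⟨a, ha⟩ := Polynomial.natDegree_eq_zero.mp hn0
    have ha0 : a ≠ 0 := fun h => hf0 (by rw [← ha, h, map_zero])
    have hadeg : a.natDegree ≠ 0 := by
      intro h
      obtain ⟨c, hc⟩ := Polynomial.natDegree_eq_zero.mp h
      exact hnc ⟨c, by rw [← ha, ← hc]⟩
    have hPsiC : Psi f = ph2 a := by rw [← ha, Psi_apply, Polynomial.eval₂_C]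
    rw [hPsiC, (PP_ph2 ha0).degt_eq (Polynomial.C_ne_zero.mpr
      (Polynomial.leadingCoeff_ne_zero.mpr ha0))]
    omega
  · obtain ⟨M, w, hw0, hP, hbd, hdeg, htc0, htc1⟩ := Cmain f.natDegree f rfl hf0
    have hPsine : Psi f ≠ 0 := Psi_ne_zero hf0
    have hQ : QQ (Psi f) (degt (Psi f)) := QQ_degt hPsine
    have hE : EE (Psi f) f.natDegree := EE_Psi f
    have hQchi : QQ (Psi' f) (degt (Psi f) + f.natDegree) := by
      rw [← chi_Psi]
      exact QQ_chi hQ hE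
    have hMle : M ≤ degt (Psi f) + f.natDegree := by
      by_contra hc
      exact hw0 (hP.2 ▸ hQchi M (by omega))
    -- case analysis on the degree of the top coefficient
    rcases Nat.lt_or_ge (topc f).natDegree 1 with htd | htd
    · -- (topc f).natDegree = 0
      have hc1 : (topc f).coeff 1 = 0 := Polynomial.coeff_eq_zero_of_natDegree_lt htd
      have hdv : dval (topc f) = 2 * ((topc f).coeff 0).natDegree := dval_of_constant hc1
      by_cases hNN2 : 2 ≤ NNc f
      · omega
      · have hNN0 : NNc f ≠ 0 := by
          intro h
          apply hn0
          omega
        have hNN1 : NNc f = 1 := by omega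
        by_cases hda : 1 ≤ ((topc f).coeff 0).natDegree
        · omega
        · -- the special case : f = c₀ g + r
          have hfd2 : f.natDegree = 2 := by omega
          have hle : ¬ f.natDegree ≤ 1 := by omega
          set q := f /ₘ gA with hq
          have hqd : q.natDegree = 0 := by
            rw [hq, Polynomial.natDegree_divByMonic f monic_gA, natDegree_gA, hfd2]
          have htq : topc f = q := by
            rw [topc_of_gt hle, ← hq, topc_of_le (by omega)]
          have hq0 : q ≠ 0 := by rw [← htq]; exact htc0
          obtain ⟨aq, haq⟩ := Polynomial.natDegree_eq_zero.mp hqd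
          have haqd : aq.natDegree = 0 := by
            have h5 : (topc f).coeff 0 = aq := by rw [htq, ← haq]; simp
            rw [← h5]
            omega
          obtain ⟨c₀, hc₀⟩ := Polynomial.natDegree_eq_zero.mp haqd
          have hc₀0 : c₀ ≠ 0 := by
            intro h
            apply hq0
            rw [← haq, ← hc₀, h]
            simp
          have hqC : q = Polynomial.C (Polynomial.C c₀) := by rw [hc₀, haq]
          have hPq : PP (Psi q) 0 (Polynomial.C c₀) := by
            rw [hqC, Psi_apply, Polynomial.eval₂_C, ph2_apply, Polynomial.eval₂_C, cc_apply]
            exact PP_single 0 _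
          have hPgq : PP (Psi (gA * q)) 3 (2 * Polynomial.C c₀) := by
            rw [map_mul]
            have h := PP_Psi_gA.mul hPq
            rwa [show (3:ℤ) + 0 = 3 by norm_num] at h
          have h2c0 : (2 : Polynomial ℂ) * Polynomial.C c₀ ≠ 0 := by
            simp [hc₀0]
          set r := f %ₘ gA with hr
          have hfd : f = r + gA * q := (Polynomial.modByMonic_add_div f gA).symm
      
          have hPsif : Psi f = Psi r + Psi (gA * q) := by
            conv_lhs => rw [hfd]
            rw [map_add]
          by_cases hr0 : r = 0
          · rw [hPsif, hr0, map_zero, zero_add, hPgq.degt_eq h2c0]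
            omega
          · obtain ⟨c, hc0, hPr⟩ := PP_lin PP_YY hr0 (natDegree_mod_le f)
            have hPr' : PP (Psi r) (dval r) (Polynomial.C c) := by
              rw [Psi_apply]; exact hPr
            rcases lt_trichotomy (dval r) 3 with hlt | heq | hgt
            · rw [hPsif, (PP.add_right hPr'.1 hPgq hlt).degt_eq h2c0]
              omega
            · exact absurd heq (dval_ne_three r)
            · rw [hPsif, (hPr'.add_left hPgq.1 hgt).degt_eq (Polynomial.C_ne_zero.mpr hc0)]
              omega
    · -- (topc f).natDegree = 1
      have htd1 : (topc f).natDegree = 1 := by omega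
      have hcoe : (topc f).coeff 1 ≠ 0 := by
        have h := Polynomial.leadingCoeff_ne_zero.mpr htc0
        rwa [Polynomial.leadingCoeff, htd1] at h
      have := dval_ge_five hcoe
      omega

/-! ### relating `Phi` and `Psi` -/

/-- `ℂ[x] → ℂ[x,y]` -/
def cX : Polynomial ℂ →+* Pxy :=
  Polynomial.eval₂RingHom MvPolynomial.C (MvPolynomial.X 0)

/-- `ℂ[x][y] → ℂ[x,y]` -/
def tau : AA →+* Pxy := Polynomial.eval₂RingHom cX (MvPolynomial.X 1)

lemma tau_C_C (c : ℂ) : tau (Polynomial.C (Polynomial.C c)) = MvPolynomial.C c := by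
  rw [tau, Polynomial.coe_eval₂RingHom, Polynomial.eval₂_C, cX, Polynomial.coe_eval₂RingHom,
    Polynomial.eval₂_C]

lemma tau_surjective : Function.Surjective tau := by
  intro p
  induction p using MvPolynomial.induction_on with
  | C c => exact ⟨Polynomial.C (Polynomial.C c), tau_C_C c⟩
  | add p q hp hq =>
      obtain ⟨F, hF⟩ := hp
      obtain ⟨G, hG⟩ := hq
      exact ⟨F + G, by rw [map_add, hF, hG]⟩
  | mul_X p i hp =>
      obtain ⟨F, hF⟩ := hp
      fin_cases i
      · refine ⟨F * Polynomial.C Polynomial.X, ?_⟩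
        rw [map_mul, hF, tau, Polynomial.coe_eval₂RingHom, Polynomial.eval₂_C, cX,
          Polynomial.coe_eval₂RingHom, Polynomial.eval₂_X]
        rfl
      · refine ⟨F * Polynomial.X, ?_⟩
        rw [map_mul, hF, tau, Polynomial.coe_eval₂RingHom, Polynomial.eval₂_X]
        rfl

lemma Phi_X0 : Phi (MvPolynomial.X 0) = T 2 := by
  rw [Phi, MvPolynomial.aeval_X]
  rfl

lemma Phi_X1 : Phi (MvPolynomial.X 1) = YY := by
  rw [Phi, MvPolynomial.aeval_X]
  rfl

lemma Phi_C (c : ℂ) : Phi (MvPolynomial.C c) = AddMonoidAlgebra.single 0 (Polynomial.C c) := by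
  rw [Phi, MvPolynomial.aeval_C]
  rw [LaurentPolynomial.algebraMap_apply, Polynomial.algebraMap_apply]
  simp only [Algebra.algebraMap_self, RingHom.id_apply]
  rw [single_eq_C]

lemma Phi_tau (F : AA) : Phi (tau F) = Psi F := by
  have h1 : Phi (tau F) = Phi.toRingHom (Polynomial.eval₂ cX (MvPolynomial.X 1) F) := rfl
  rw [h1, Polynomial.hom_eval₂]
  have h2 : Phi.toRingHom.comp cX = ph2 := by
    refine Polynomial.ringHom_ext (fun c => ?_) ?_
    · have : Phi.toRingHom.comp cX (Polynomial.C c) = Phi (MvPolynomial.C c) := by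
        rw [RingHom.comp_apply, cX, Polynomial.coe_eval₂RingHom, Polynomial.eval₂_C]
        rfl
      rw [this, Phi_C, ph2_apply, Polynomial.eval₂_C, cc_apply]
    · have : Phi.toRingHom.comp cX Polynomial.X = Phi (MvPolynomial.X 0) := by
        rw [RingHom.comp_apply, cX, Polynomial.coe_eval₂RingHom, Polynomial.eval₂_X]
        rfl
      rw [this, Phi_X0, ph2_X]
  have h3 : Phi.toRingHom (MvPolynomial.X 1) = YY := Phi_X1
  rw [h2, h3, Psi_apply]

/-! ### realizing all values `m ≥ 2` -/

lemma PP_phi_pow (α β : ℕ) :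
    PP (Phi ((MvPolynomial.X 0) ^ α *
      ((MvPolynomial.X 1) ^ 2 - (MvPolynomial.X 0) ^ 5) ^ β))
      (α * 2 + β * 3) ((2 : Polynomial ℂ) ^ β) := by
  have hg : Phi ((MvPolynomial.X 1) ^ 2 - (MvPolynomial.X 0) ^ 5) = YY ^ 2 - T 10 := by
    rw [map_sub, map_pow, map_pow, Phi_X0, Phi_X1, T_pow]
    norm_num
  rw [map_mul, map_pow, map_pow, hg, Phi_X0]
  have h1 : PP ((T 2 : LPt) ^ α) (α * 2) 1 := by
    have h := (PP_T 2).pow α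
    rwa [one_pow] at h
  have h2 : PP ((YY ^ 2 - T 10) ^ β) (β * 3) ((2 : Polynomial ℂ) ^ β) := PP_YYsq.pow β
  have h := h1.mul h2
  rwa [one_mul] at h

lemma exists_poly_of_ge_two {m : ℤ} (hm : 2 ≤ m) :
    ∃ f : Pxy, (¬ ∃ c : ℂ, f = MvPolynomial.C c) ∧ m = degt (Phi f) := by
  obtain ⟨α, β, hαβ⟩ : ∃ α β : ℕ, (α : ℤ) * 2 + (β : ℤ) * 3 = m ∧ 0 < α + β := by
    rcases Int.even_or_odd m with ⟨k, hk⟩ | ⟨k, hk⟩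
    · exact ⟨k.toNat, 0, by omega, by omega⟩
    · exact ⟨(k - 1).toNat, 1, by omega, by omega⟩
  set f : Pxy := (MvPolynomial.X 0) ^ α *
      ((MvPolynomial.X 1) ^ 2 - (MvPolynomial.X 0) ^ 5) ^ β with hf
  have hP := PP_phi_pow α β
  have h2b : (2 : Polynomial ℂ) ^ β ≠ 0 := pow_ne_zero _ (by norm_num)
  have hdeg : degt (Phi f) = α * 2 + β * 3 := hP.degt_eq h2b
  refine ⟨f, ?_, by omega⟩
  rintro ⟨c, hc⟩
  have hcoeff : (Phi f) ((α : ℤ) * 2 + (β : ℤ) * 3) = (2 : Polynomial ℂ) ^ β := hP.2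
  rw [hc, Phi_C, AddMonoidAlgebra.coeff_single, Finsupp.single_apply, if_neg (by omega)] at hcoeff
  exact h2b hcoeff.symm

/-! ### the main theorem -/

theorem semigroup_of_values :
    Function.Injective Phi ∧
    {m : ℤ | ∃ f : Pxy, (¬ ∃ c : ℂ, f = MvPolynomial.C c) ∧ m = degt (Phi f)} =
      {m : ℤ | 2 ≤ m} := by
  constructor
  · rw [injective_iff_map_eq_zero]
    intro f hf0
    obtain ⟨F, rfl⟩ := tau_surjective f
    rw [Phi_tau] at hf0
    by_contra hne
    have hF0 : F ≠ 0 := fun h => hne (by rw [h, map_zero])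
    exact Psi_ne_zero hF0 hf0
  · ext m
    simp only [Set.mem_setOf_eq]
    constructor
    · rintro ⟨f, hnc, rfl⟩
      obtain ⟨F, rfl⟩ := tau_surjective f
      rw [Phi_tau]
      apply degt_Psi_ge
      rintro ⟨c, rfl⟩
      exact hnc ⟨c, tau_C_C c⟩
    · exact exists_poly_of_ge_two
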